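/- arXiv:1909.05902 — 4 statements merged into one kernel-verified Lean document; each statement's English description precedes it below -/
import Mathlib

section
/- The Bergman projection P on the bidisc 𝔻² is not of weak-type (1,1): there is no constant C > 0 such that for every f ∈ L¹(𝔻²) and every λ > 0 one has |{(z₁,z₂) ∈ 𝔻² : |P f(z₁,z₂)| > λ}| ≤ C ‖f‖_{L¹(𝔻²)} / λ, where |·| denotes Lebesgue measure. -/
open MeasureTheory Complex Set

open Metric

noncomputable section

/-- The bidisc `𝔻² ⊂ ℂ²`. -/
def bidisc : Set (ℂ × ℂ) := {z | ‖z.1‖ < 1 ∧ ‖z.2‖ < 1}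

/-- The Bergman projection on the bidisc. -/
noncomputable def bergmanBidisc (f : ℂ × ℂ → ℂ) (z : ℂ × ℂ) : ℂ :=
  ∫ w in bidisc, f w /
    ((Real.pi : ℂ) ^ 2 * (1 - z.1 * (starRingEnd ℂ) w.1) ^ 2 *
      (1 - z.2 * (starRingEnd ℂ) w.2) ^ 2)

lemma integrableOn_ball_cont {g : ℂ → ℂ} (hg : Continuous g) (a : ℂ) (δ : ℝ) :
    IntegrableOn g (ball a δ) :=
  (hg.continuousOn.integrableOn_compact (isCompact_closedBall a δ)).mono_set
    ball_subset_closedBall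

lemma integral_pow_ball_zero {δ : ℝ} {n : ℕ} (hn : n ≠ 0) :
    ∫ w in ball (0:ℂ) δ, w ^ n = 0 := by
  set c : Circle := Circle.exp (Real.pi / n) with hc
  have hrot : MeasurePreserving (fun w : ℂ => (c : ℂ) * w) volume volume :=
    (rotation c).measurePreserving
  have hemb : MeasurableEmbedding (fun w : ℂ => (c : ℂ) * w) :=
    (rotation c).toHomeomorph.measurableEmbedding
  have hpre : (fun w : ℂ => (c : ℂ) * w) ⁻¹' (ball (0:ℂ) δ) = ball (0:ℂ) δ := by
    ext w
    simp [mem_ball, dist_zero_right, norm_mul, Circle.norm_coe]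
  have key : ∫ w in ball (0:ℂ) δ, ((c:ℂ) * w) ^ n = ∫ w in ball (0:ℂ) δ, w ^ n := by
    conv_lhs => rw [← hpre]
    exact hrot.setIntegral_preimage_emb hemb _ _
  have hn' : (n : ℂ) ≠ 0 := Nat.cast_ne_zero.mpr hn
  have hcn : (c : ℂ) ^ n = -1 := by
    rw [hc, Circle.coe_exp, ← Complex.exp_nat_mul]
    have : (n : ℂ) * (↑(Real.pi / (n:ℝ)) * I) = Real.pi * I := by
      push_cast
      field_simp
    rw [this, Complex.exp_pi_mul_I]
  have h2 : (-1 : ℂ) * ∫ w in ball (0:ℂ) δ, w ^ n = ∫ w in ball (0:ℂ) δ, w ^ n := by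
    rw [← hcn]
    calc (c:ℂ)^n * ∫ w in ball (0:ℂ) δ, w ^ n
        = ∫ w in ball (0:ℂ) δ, ((c:ℂ) * w) ^ n := by
          rw [← integral_const_mul]; simp [mul_pow]
      _ = _ := key
  linear_combination -h2/2

lemma integral_const_ball {a : ℂ} {δ : ℝ} (hδ : 0 ≤ δ) :
    ∫ _ in ball a δ, (1:ℂ) = ((Real.pi * δ^2 : ℝ) : ℂ) := by
  rw [setIntegral_const]
  rw [Complex.real_smul]
  norm_cast
  rw [measureReal_def, Complex.volume_ball]
  rw [ENNReal.toReal_mul]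
  simp [ENNReal.toReal_pow, ENNReal.toReal_ofReal hδ]
  ring

lemma integral_sub_pow_ball {a : ℂ} {δ : ℝ} (hδ : 0 ≤ δ) (n : ℕ) :
    ∫ w in ball a δ, (w - a) ^ n = if n = 0 then ((Real.pi * δ^2 : ℝ) : ℂ) else 0 := by
  have hmp : MeasurePreserving (fun w : ℂ => w + a) volume volume :=
    measurePreserving_add_right volume a
  have hemb : MeasurableEmbedding (fun w : ℂ => w + a) :=
    (MeasurableEquiv.addRight a).measurableEmbedding
  have hpre : (fun w : ℂ => w + a) ⁻¹' (ball a δ) = ball (0:ℂ) δ := by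
    ext w; simp [mem_ball, dist_eq_norm]
  have key : ∫ w in ball a δ, (w - a) ^ n = ∫ w in ball (0:ℂ) δ, w ^ n := by
    rw [← hmp.setIntegral_preimage_emb hemb (fun w => (w - a)^n) (ball a δ), hpre]
    simp
  rcases Nat.eq_zero_or_pos n with h | h
  · subst h; simpa using integral_const_ball (a := a) hδ
  · have hne : n ≠ 0 := Nat.pos_iff_ne_zero.mp h
    rw [key, integral_pow_ball_zero hne]
    simp [hne]

lemma integral_monomial_ball {a : ℂ} {δ : ℝ} (hδ : 0 ≤ δ) (n : ℕ) :
    ∫ w in ball a δ, w ^ n = ((Real.pi * δ^2 : ℝ) : ℂ) * a ^ n := by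
  have expand : ∀ w : ℂ, w ^ n = ∑ k ∈ Finset.range (n+1), (w - a)^k * (a^(n-k) * (n.choose k)) := by
    intro w
    have h := add_pow (w - a) a n
    simp only [sub_add_cancel] at h
    rw [h]
    apply Finset.sum_congr rfl
    intro k _
    ring
  calc ∫ w in ball a δ, w ^ n
      = ∫ w in ball a δ, ∑ k ∈ Finset.range (n+1), (w - a)^k * (a^(n-k) * (n.choose k)) := by
        apply setIntegral_congr_fun measurableSet_ball
        intro w _; exact expand w
    _ = ∑ k ∈ Finset.range (n+1), ∫ w in ball a δ, (w - a)^k * (a^(n-k) * (n.choose k)) := by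
        apply integral_finset_sum
        intro k _
        exact (integrableOn_ball_cont (by continuity) a δ)
    _ = ∑ k ∈ Finset.range (n+1), (∫ w in ball a δ, (w - a)^k) * (a^(n-k) * (n.choose k)) := by
        simp [integral_mul_const]
    _ = ((Real.pi * δ^2 : ℝ) : ℂ) * a ^ n := by
        rw [Finset.sum_eq_single 0]
        · rw [integral_sub_pow_ball hδ 0]; simp
        · intro k _ hk
          rw [integral_sub_pow_ball hδ k]
          simp [hk]
        · simp

lemma hasSum_one_sub_sq_inv {x : ℂ} (hx : ‖x‖ < 1) :
    HasSum (fun n : ℕ => ((n:ℂ)+1) * x^n) (((1-x)^2)⁻¹) := by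
  have hx' : ‖x‖ < 1 := by exact hx
  have h1 := hasSum_coe_mul_geometric_of_norm_lt_one (𝕜 := ℂ) hx'
  have h2 := hasSum_geometric_of_norm_lt_one (ξ := x) hx'
  have h := h1.add h2
  have hne : (1 : ℂ) - x ≠ 0 := by
    intro h0
    have : x = 1 := by linear_combination -h0
    simp [this] at hx
  have heq : x / (1-x)^2 + (1-x)⁻¹ = ((1-x)^2)⁻¹ := by
    field_simp
    ring
  rw [heq] at h
  convert h using 2 with n
  case e'_5 => ring
  case e'_3 => rfl

lemma integral_kernel_ball {c a : ℂ} {δ : ℝ} (hc : ‖c‖ < 1)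
    (ha : ‖a‖ + δ < 1) (hδ : 0 < δ) :
    ∫ w in ball a δ, ((1 - c * w)^2)⁻¹ = ((Real.pi * δ^2 : ℝ):ℂ) * ((1 - c * a)^2)⁻¹ := by
  set μ := volume.restrict (ball a δ)
  set F : ℕ → ℂ → ℂ := fun n w => ((n:ℂ)+1) * c^n * w^n with hF
  have habsnn : (0:ℝ) ≤ ‖a‖ + δ := by positivity
  have hq : ‖c‖ * (‖a‖ + δ) < 1 := by
    nlinarith [norm_nonneg c, norm_nonneg a, hδ]
  set q : ℝ := ‖c‖ * (‖a‖ + δ) with hqdef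
  have hq0 : 0 ≤ q := by positivity
  -- integrability of each term
  have hFint : ∀ n, Integrable (F n) μ := fun n =>
    integrableOn_ball_cont (by continuity) a δ
  have hq1 : |q| < 1 := by rwa [_root_.abs_of_nonneg hq0]
  have hvol : (volume (ball a δ)).toReal = Real.pi * δ^2 := by
    rw [Complex.volume_ball, ENNReal.toReal_mul, ENNReal.toReal_pow,
      ENNReal.toReal_ofReal hδ.le]
    simp [mul_comm]
  have habsw : ∀ w ∈ ball a δ, ‖w‖ < ‖a‖ + δ := by
    intro w hw
    have h1 : ‖w - a‖ < δ := by rw [← Complex.dist_eq]; exact mem_ball.mp hw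
    calc ‖w‖ = ‖a + (w - a)‖ := by ring_nf
      _ ≤ ‖a‖ + ‖w - a‖ := norm_add_le _ _
      _ < ‖a‖ + δ := by linarith
  have hbound : ∀ n : ℕ, (∫ w, ‖F n w‖ ∂μ) ≤ ((n:ℝ)+1) * q^n * (Real.pi * δ^2) := by
    intro n
    have h1 : ∀ w ∈ ball a δ, ‖‖F n w‖‖ ≤ ((n:ℝ)+1) * q^n := by
      intro w hw
      rw [norm_norm]
      have hnorm : ‖F n w‖ = ((n:ℝ)+1) * ((‖c‖)^n * (‖w‖)^n) := by
        have hcast : ((n:ℂ)+1) = ((n+1:ℕ):ℂ) := by push_cast; ring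
        simp only [hF, norm_mul, norm_pow, hcast, Complex.norm_natCast]
        push_cast; ring
      rw [hnorm, hqdef, mul_pow]
      gcongr
      exact (habsw w hw).le
    have h2 := norm_setIntegral_le_of_norm_le_const (μ := volume) (s := ball a δ)
      (f := fun w => ‖F n w‖) (C := ((n:ℝ)+1) * q^n)
      measure_ball_lt_top h1
    rw [measureReal_def, hvol] at h2
    calc (∫ w, ‖F n w‖ ∂μ) ≤ ‖∫ w, ‖F n w‖ ∂μ‖ := le_abs_self _
      _ ≤ ((n:ℝ)+1) * q^n * (Real.pi * δ^2) := h2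
  have hsumbound : Summable (fun n : ℕ => ((n:ℝ)+1) * q^n * (Real.pi * δ^2)) := by
    apply Summable.mul_right
    have hA := summable_pow_mul_geometric_of_norm_lt_one (R := ℝ) 1 (r := q)
      (by rwa [Real.norm_eq_abs])
    have hB := summable_geometric_of_lt_one hq0 hq
    exact (hA.add hB).congr (fun n => by push_cast; ring)
  have hFsum : Summable (fun n : ℕ => ∫ w, ‖F n w‖ ∂μ) :=
    Summable.of_nonneg_of_le (fun n => integral_nonneg (fun w => norm_nonneg _))
      hbound hsumbound
  have key := hasSum_integral_of_summable_integral_norm hFint hFsum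
  -- identify the integral of the tsum with the kernel integral
  have htsum : ∀ w ∈ ball a δ, (∑' n, F n w) = ((1 - c*w)^2)⁻¹ := by
    intro w hw
    have habscw : ‖c * w‖ < 1 := by
      rw [norm_mul]
      calc ‖c‖ * ‖w‖ ≤ ‖c‖ * (‖a‖ + δ) :=
        mul_le_mul_of_nonneg_left (habsw w hw).le (norm_nonneg c)
        _ < 1 := hq
    have hs := hasSum_one_sub_sq_inv habscw
    have hFeq : ∀ n : ℕ, ((n:ℂ)+1) * (c*w)^n = F n w := by
      intro n; simp [hF, mul_pow]; ring
    have hs' : HasSum (fun n => F n w) (((1 - c*w)^2)⁻¹) := by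
      rw [show (fun n : ℕ => F n w) = (fun n : ℕ => ((n:ℂ)+1)*(c*w)^n) from
        funext fun n => (hFeq n).symm]
      exact hs
    exact hs'.tsum_eq
  have hint : ∫ w, (∑' n, F n w) ∂μ = ∫ w in ball a δ, ((1-c*w)^2)⁻¹ :=
    setIntegral_congr_fun measurableSet_ball (fun w hw => htsum w hw)
  rw [hint] at key
  have hterm : ∀ n : ℕ, (∫ w, F n w ∂μ) = ((Real.pi * δ^2:ℝ):ℂ) * (((n:ℂ)+1) * (c*a)^n) := by
    intro n
    simp only [hF]
    rw [integral_const_mul, integral_monomial_ball hδ.le n, mul_pow]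
    ring
  have habsca : ‖c*a‖ < 1 := by
    rw [norm_mul]
    calc ‖c‖ * ‖a‖ ≤ ‖c‖ * (‖a‖ + δ) := by
          apply mul_le_mul_of_nonneg_left _ (norm_nonneg c)
          linarith
      _ < 1 := hq
  have hsum2 : HasSum (fun n => ∫ w, F n w ∂μ)
      (((Real.pi*δ^2:ℝ):ℂ) * ((1 - c*a)^2)⁻¹) := by
    have h := (hasSum_one_sub_sq_inv habsca).mul_left ((Real.pi*δ^2:ℝ):ℂ)
    rw [show (fun n : ℕ => ∫ w, F n w ∂μ)
      = (fun n : ℕ => ((Real.pi*δ^2:ℝ):ℂ) * (((n:ℂ)+1) * (c*a)^n)) from funext hterm]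
    exact h
  exact key.unique hsum2

lemma integral_kernel_conj_ball {z : ℂ} {a δ : ℝ} (hz : ‖z‖ < 1)
    (ha : 0 ≤ a) (haδ : a + δ < 1) (hδ : 0 < δ) :
    ∫ w in ball (a:ℂ) δ, ((1 - z * (starRingEnd ℂ) w)^2)⁻¹
      = ((Real.pi * δ^2 : ℝ):ℂ) * ((1 - z * a)^2)⁻¹ := by
  have h1 : ∀ w : ℂ, ((1 - z * (starRingEnd ℂ) w)^2)⁻¹
      = (starRingEnd ℂ) (((1 - (starRingEnd ℂ) z * w)^2)⁻¹) := by
    intro w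
    rw [map_inv₀, map_pow, map_sub, map_one, map_mul, Complex.conj_conj]
  simp_rw [h1]
  rw [integral_conj]
  rw [integral_kernel_ball (by rwa [Complex.norm_conj])
    (by rwa [Complex.norm_real, Real.norm_of_nonneg ha]) hδ]
  rw [map_mul, map_inv₀, map_pow, map_sub, map_one, map_mul, Complex.conj_conj,
    Complex.conj_ofReal, Complex.conj_ofReal]

lemma ball_subset_unit {a δ : ℝ} (ha : 0 ≤ a) (haδ : a + δ < 1) :
    ∀ w ∈ ball (a:ℂ) δ, ‖w‖ < 1 := by
  intro w hw
  have h1 : ‖w - a‖ < δ := by rw [← Complex.dist_eq]; exact mem_ball.mp hw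
  calc ‖w‖ = ‖(a:ℂ) + (w - a)‖ := by ring_nf
    _ ≤ ‖(a:ℂ)‖ + ‖w - a‖ := norm_add_le _ _
    _ < 1 := by rw [Complex.norm_real, Real.norm_of_nonneg ha]; linarith

lemma bergman_indicator {a δ : ℝ} (ha : 0 ≤ a) (haδ : a + δ < 1) (hδ : 0 < δ)
    {z : ℂ × ℂ} (hz : z ∈ bidisc) :
    bergmanBidisc ((ball (a:ℂ) δ ×ˢ ball (a:ℂ) δ).indicator 1) z
      = ((δ^2*δ^2 : ℝ):ℂ) * (((1 - z.1*a)^2)⁻¹ * ((1 - z.2*a)^2)⁻¹) := by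
  set B := ball (a:ℂ) δ with hB
  have hBsub : B ×ˢ B ⊆ bidisc := by
    rintro ⟨w₁, w₂⟩ ⟨h1, h2⟩
    exact ⟨ball_subset_unit ha haδ w₁ h1, ball_subset_unit ha haδ w₂ h2⟩
  have hBm : MeasurableSet (B ×ˢ B) := (measurableSet_ball.prod measurableSet_ball)
  have step1 : ∀ w : ℂ × ℂ, ((B ×ˢ B).indicator 1 w) /
      ((Real.pi : ℂ) ^ 2 * (1 - z.1 * (starRingEnd ℂ) w.1) ^ 2 *
        (1 - z.2 * (starRingEnd ℂ) w.2) ^ 2)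
      = (B ×ˢ B).indicator (fun w => ((Real.pi:ℂ) ^ 2 * (1 - z.1 * (starRingEnd ℂ) w.1) ^ 2)⁻¹ *
          ((1 - z.2 * (starRingEnd ℂ) w.2) ^ 2)⁻¹) w := by
    intro w
    by_cases hw : w ∈ B ×ˢ B
    · simp [indicator_of_mem hw, mul_inv, div_eq_mul_inv]; ring
    · simp [indicator_of_notMem hw]
  rw [bergmanBidisc]
  simp_rw [step1]
  rw [integral_indicator hBm, Measure.restrict_restrict hBm,
    inter_eq_self_of_subset_left hBsub]
  rw [Measure.volume_eq_prod, ← Measure.prod_restrict,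
    integral_prod_mul (μ := volume.restrict B) (ν := volume.restrict B)
      (f := fun w₁ => ((Real.pi:ℂ)^2 * (1 - z.1 * (starRingEnd ℂ) w₁)^2)⁻¹)
      (g := fun w₂ => ((1 - z.2 * (starRingEnd ℂ) w₂)^2)⁻¹)]
  have e1 : (∫ w₁ in B, ((Real.pi:ℂ)^2 * (1 - z.1 * (starRingEnd ℂ) w₁)^2)⁻¹)
      = ((Real.pi:ℂ)^2)⁻¹ * (((Real.pi * δ^2 : ℝ):ℂ) * ((1 - z.1*a)^2)⁻¹) := by
    simp_rw [mul_inv]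
    rw [integral_const_mul, integral_kernel_conj_ball hz.1 ha haδ hδ]
  have e2 : (∫ w₂ in B, ((1 - z.2 * (starRingEnd ℂ) w₂)^2)⁻¹)
      = ((Real.pi * δ^2 : ℝ):ℂ) * ((1 - z.2*a)^2)⁻¹ :=
    integral_kernel_conj_ball hz.2 ha haδ hδ
  rw [e1, e2]
  generalize ((1 - z.1 * (a:ℂ))^2)⁻¹ = A
  generalize ((1 - z.2 * (a:ℂ))^2)⁻¹ = B
  have hπ : ((Real.pi:ℂ)) ≠ 0 := by
    simpa using Real.pi_ne_zero
  push_cast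
  field_simp

def Rset (s : ℝ) : Set ℂ := {z : ℂ | z.re ∈ Ioo (1-s) (1-s/2) ∧ z.im ∈ Ioo 0 (s/4)}

lemma Rset_eq (s : ℝ) :
    Rset s = Complex.measurableEquivRealProd ⁻¹' (Ioo (1-s) (1-s/2) ×ˢ Ioo 0 (s/4)) := by
  rfl

lemma Rset_measurable (s : ℝ) : MeasurableSet (Rset s) := by
  rw [Rset_eq]
  exact (measurableSet_Ioo.prod measurableSet_Ioo).preimage
    Complex.measurableEquivRealProd.measurable

lemma Rset_volume {s : ℝ} (hs : 0 ≤ s) : volume (Rset s) = ENNReal.ofReal (s^2/8) := by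
  rw [Rset_eq]
  rw [Complex.volume_preserving_equiv_real_prod.measure_preimage
    ((measurableSet_Ioo.prod measurableSet_Ioo).nullMeasurableSet)]
  rw [Measure.volume_eq_prod, Measure.prod_prod, Real.volume_Ioo, Real.volume_Ioo,
    ← ENNReal.ofReal_mul (by linarith)]
  congr 1
  ring

lemma Rset_disjoint {s s' : ℝ} (h : s ≤ s'/2) : Disjoint (Rset s) (Rset s') := by
  rw [Set.disjoint_left]
  intro z hz hz'
  have h1 := hz.1.1
  have h2 := hz'.1.2
  linarith [hz.1.1, hz'.1.2]

lemma Rset_abs_lt_one {s : ℝ} (hs2 : s ≤ 1/2) {z : ℂ} (hz : z ∈ Rset s) :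
    ‖z‖ < 1 := by
  obtain ⟨⟨hre1, hre2⟩, him1, him2⟩ := hz
  have hs0 : 0 < s := by nlinarith
  have hsq : (‖z‖)^2 < 1 := by
    rw [Complex.sq_norm, Complex.normSq_apply]
    nlinarith
  nlinarith [norm_nonneg z]

lemma Rset_kernel_bound {s ε : ℝ} (hε : 0 < ε) (hεs : ε ≤ s) (hs2 : s ≤ 1/2)
    {z : ℂ} (hz : z ∈ Rset s) :
    ‖1 - z * ((1-ε : ℝ):ℂ)‖ ≤ 3*s := by
  obtain ⟨⟨hre1, hre2⟩, him1, him2⟩ := hz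
  have hzabs : ‖z‖ < 1 := Rset_abs_lt_one hs2 ⟨⟨hre1, hre2⟩, him1, him2⟩
  have key : (1:ℂ) - z * ((1-ε : ℝ):ℂ) = (1 - z) + z * (ε:ℂ) := by
    push_cast
    ring
  rw [key]
  calc ‖(1 - z) + z * (ε:ℂ)‖
      ≤ ‖1-z‖ + ‖z * (ε:ℂ)‖ := norm_add_le _ _
    _ ≤ (|(1-z).re| + |(1-z).im|) + ‖z‖ * ε := by
        rw [norm_mul, Complex.norm_real, Real.norm_of_nonneg hε.le]
        exact add_le_add_left (Complex.norm_le_abs_re_add_abs_im _) _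
    _ ≤ 3*s := by
        have e1 : (1-z : ℂ).re = 1 - z.re := by simp
        have e2 : (1-z : ℂ).im = -z.im := by simp
        rw [e1, e2]
        rw [_root_.abs_of_nonneg (by linarith : (0:ℝ) ≤ 1 - z.re), abs_neg,
          _root_.abs_of_nonneg him1.le]
        nlinarith

set_option maxHeartbeats 1000000 in
/-- The Bergman projection on the bidisc is not of weak-type (1,1). -/
theorem bergmanBidisc_not_weak_type_one_one :
    ¬ ∃ C : ℝ, 0 < C ∧ ∀ f : ℂ × ℂ → ℂ, IntegrableOn f bidisc volume →
      ∀ lam : ℝ, 0 < lam →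
        volume {z ∈ bidisc | lam < ‖bergmanBidisc f z‖} ≤
          ENNReal.ofReal (C * (∫ w in bidisc, ‖f w‖) / lam) := by
  rintro ⟨C, hC, hweak⟩
  obtain ⟨K, hK⟩ := exists_nat_gt (10368 * C * Real.pi^2)
  -- parameters
  set ε : ℝ := 1 / 2^(K+1) with hεdef
  have hε : 0 < ε := by positivity
  have hhalf : (2:ℝ)^K * ε = 1/2 := by
    rw [hεdef, pow_succ]
    field_simp
  have hε2 : ε ≤ 1/2 := by
    nlinarith [one_le_pow₀ (by norm_num : (1:ℝ) ≤ 2) (n := K)]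
  set a : ℝ := 1 - ε with hadef
  set δ : ℝ := ε/2 with hδdef
  have hδ : 0 < δ := by positivity
  have ha : 0 ≤ a := by rw [hadef]; linarith
  have haδ : a + δ < 1 := by rw [hadef, hδdef]; linarith
  set B : Set ℂ := ball (a:ℂ) δ with hBdef
  set f : ℂ × ℂ → ℂ := (B ×ˢ B).indicator 1 with hfdef
  set G : ℝ := ((2:ℝ)^K * ε^2)^2 with hGdef
  have hG : 0 < G := by positivity
  set lam : ℝ := δ^4 / (2 * (81 * G)) with hlamdef
  have hlam : 0 < lam := by positivity
  have hBm : MeasurableSet (B ×ˢ B) := measurableSet_ball.prod measurableSet_ball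
  have hBsub : B ×ˢ B ⊆ bidisc := by
    rintro ⟨w₁, w₂⟩ ⟨h1, h2⟩
    exact ⟨ball_subset_unit ha haδ w₁ h1, ball_subset_unit ha haδ w₂ h2⟩
  -- volume of B ×ˢ B
  have hBvol : volume (B ×ˢ B) = (ENNReal.ofReal δ ^ 2 * NNReal.pi) *
      (ENNReal.ofReal δ ^ 2 * NNReal.pi) := by
    rw [Measure.volume_eq_prod, Measure.prod_prod, hBdef, Complex.volume_ball]
  have hBvol_fin : volume (B ×ˢ B) < ⊤ := by
    rw [hBvol]
    have h1 : ENNReal.ofReal δ ^ 2 * ↑NNReal.pi < ⊤ :=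
      ENNReal.mul_lt_top (ENNReal.pow_lt_top ENNReal.ofReal_lt_top) ENNReal.coe_lt_top
    exact ENNReal.mul_lt_top h1 h1
  -- integrability
  have hbidisc_eq : bidisc = ball (0:ℂ) 1 ×ˢ ball (0:ℂ) 1 := by
    ext z
    simp [bidisc, mem_ball, Complex.dist_eq]
  have hbidisc_fin : volume bidisc < ⊤ := by
    rw [hbidisc_eq, Measure.volume_eq_prod, Measure.prod_prod, Complex.volume_ball]
    have h1 : ENNReal.ofReal 1 ^ 2 * ↑NNReal.pi < ⊤ :=
      ENNReal.mul_lt_top (ENNReal.pow_lt_top ENNReal.ofReal_lt_top) ENNReal.coe_lt_top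
    exact ENNReal.mul_lt_top h1 h1
  have hfint : IntegrableOn f bidisc volume := by
    rw [hfdef]
    exact Integrable.indicator
      (integrableOn_const (C := (1:ℂ)) hbidisc_fin.ne) hBm
  -- the L¹ norm of f
  have hfnorm : (∫ w in bidisc, ‖f w‖) = (volume (B ×ˢ B)).toReal := by
    have habs : (fun w => ‖f w‖) = (B ×ˢ B).indicator (fun _ => (1:ℝ)) := by
      funext w
      by_cases hw : w ∈ B ×ˢ B
      · simp [hfdef, indicator_of_mem hw]
      · simp [hfdef, indicator_of_notMem hw]
    rw [habs, integral_indicator hBm, Measure.restrict_restrict hBm,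
      inter_eq_self_of_subset_left hBsub, setIntegral_const, smul_eq_mul, mul_one, measureReal_def]
  have hNR : (volume (B ×ˢ B)).toReal = Real.pi^2 * δ^4 := by
    rw [hBvol]
    simp only [ENNReal.toReal_mul, ENNReal.toReal_pow, ENNReal.toReal_ofReal hδ.le,
      ENNReal.coe_toReal, NNReal.coe_real_pi]
    ring
  -- the superlevel set
  set SL := {z ∈ bidisc | lam < ‖bergmanBidisc f z‖} with hSL
  -- the family of disjoint boxes
  set T : ℕ → Set (ℂ × ℂ) := fun k => Rset ((2:ℝ)^k * ε) ×ˢ Rset ((2:ℝ)^(K-k) * ε)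
    with hT
  have hTsub : ∀ k ∈ Finset.range (K+1), T k ⊆ SL := by
    intro k hk
    have hkK : k ≤ K := Nat.lt_succ_iff.mp (Finset.mem_range.mp hk)
    set s : ℝ := (2:ℝ)^k * ε with hs
    set s' : ℝ := (2:ℝ)^(K-k) * ε with hs'
    have h2k : (2:ℝ)^k * (2:ℝ)^(K-k) = 2^K := by
      rw [← pow_add, Nat.add_sub_cancel' hkK]
    have hss' : s * s' = 2^K * ε^2 := by rw [hs, hs', ← h2k]; ring
    have hsle : s ≤ 1/2 := by
      rw [hs, ← hhalf]
      exact mul_le_mul_of_nonneg_right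
        (pow_le_pow_right₀ (by norm_num) hkK) hε.le
    have hs'le : s' ≤ 1/2 := by
      rw [hs', ← hhalf]
      exact mul_le_mul_of_nonneg_right
        (pow_le_pow_right₀ (by norm_num) (Nat.sub_le K k)) hε.le
    have hεs : ε ≤ s := by
      rw [hs]
      calc ε = 1*ε := by ring
        _ ≤ 2^k*ε := mul_le_mul_of_nonneg_right
            (one_le_pow₀ (by norm_num)) hε.le
    have hεs' : ε ≤ s' := by
      rw [hs']
      calc ε = 1*ε := by ring
        _ ≤ 2^(K-k)*ε := mul_le_mul_of_nonneg_right
            (one_le_pow₀ (by norm_num)) hε.le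
    rintro ⟨z₁, z₂⟩ ⟨hz1, hz2⟩
    have hzbid : (z₁, z₂) ∈ bidisc :=
      ⟨Rset_abs_lt_one hsle hz1, Rset_abs_lt_one hs'le hz2⟩
    refine ⟨hzbid, ?_⟩
    -- kernel bounds
    have ht1 : ‖1 - z₁ * (a:ℂ)‖ ≤ 3*s := by
      have := Rset_kernel_bound hε hεs hsle hz1
      rwa [← hadef] at this
    have ht2 : ‖1 - z₂ * (a:ℂ)‖ ≤ 3*s' := by
      have := Rset_kernel_bound hε hεs' hs'le hz2
      rwa [← hadef] at this
    have ht1pos : ε ≤ ‖1 - z₁ * (a:ℂ)‖ := by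
      have h1 : ‖z₁ * (a:ℂ)‖ ≤ a := by
        rw [norm_mul, Complex.norm_real, Real.norm_of_nonneg ha]
        nlinarith [(Rset_abs_lt_one hsle hz1), norm_nonneg z₁]
      calc ε = 1 - a := by rw [hadef]; ring
        _ ≤ 1 - ‖z₁ * (a:ℂ)‖ := by linarith
        _ ≤ ‖1 - z₁ * (a:ℂ)‖ := by
            have := norm_sub_norm_le (1:ℂ) (z₁ * (a:ℂ))
            simpa using this
    have ht2pos : ε ≤ ‖1 - z₂ * (a:ℂ)‖ := by
      have h1 : ‖z₂ * (a:ℂ)‖ ≤ a := by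
        rw [norm_mul, Complex.norm_real, Real.norm_of_nonneg ha]
        nlinarith [(Rset_abs_lt_one hs'le hz2), norm_nonneg z₂]
      calc ε = 1 - a := by rw [hadef]; ring
        _ ≤ 1 - ‖z₂ * (a:ℂ)‖ := by linarith
        _ ≤ ‖1 - z₂ * (a:ℂ)‖ := by
            have := norm_sub_norm_le (1:ℂ) (z₂ * (a:ℂ))
            simpa using this
    -- value of the projection
    have hval := bergman_indicator ha haδ hδ hzbid
    have habs : ‖bergmanBidisc f (z₁, z₂)‖
        = δ^4 * ((‖1 - z₁ * (a:ℂ)‖)^2 * (‖1 - z₂ * (a:ℂ)‖)^2)⁻¹ := by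
      rw [hfdef, hBdef, hval, norm_mul, norm_mul, norm_inv, norm_inv, norm_pow, norm_pow,
        Complex.norm_real]
      rw [Real.norm_of_nonneg (by positivity : (0:ℝ) ≤ δ^2*δ^2)]
      rw [mul_inv]
      ring
    rw [habs]
    set t₁ := ‖1 - z₁ * (a:ℂ)‖
    set t₂ := ‖1 - z₂ * (a:ℂ)‖
    have ht1p : 0 < t₁ := lt_of_lt_of_le hε ht1pos
    have ht2p : 0 < t₂ := lt_of_lt_of_le hε ht2pos
    have hprod : t₁^2 * t₂^2 ≤ 81 * G := by
      have h1 : t₁^2 ≤ (3*s)^2 := pow_le_pow_left₀ ht1p.le ht1 2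
      have h2 : t₂^2 ≤ (3*s')^2 := pow_le_pow_left₀ ht2p.le ht2 2
      calc t₁^2*t₂^2 ≤ (3*s)^2*(3*s')^2 :=
            mul_le_mul h1 h2 (by positivity) (by positivity)
        _ = 81 * (s*s')^2 := by ring
        _ = 81 * G := by rw [hss', hGdef]
    have hprodpos : 0 < t₁^2 * t₂^2 := by positivity
    calc lam = δ^4 / (2 * (81*G)) := hlamdef
      _ < δ^4 / (81*G) := by
          apply div_lt_div_of_pos_left (by positivity) (by positivity)
          linarith [hG]
      _ ≤ δ^4 / (t₁^2 * t₂^2) := by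
          apply div_le_div_of_nonneg_left (by positivity) hprodpos hprod
      _ = δ^4 * (t₁^2 * t₂^2)⁻¹ := by rw [div_eq_mul_inv]
  -- disjointness
  have hdisj : (↑(Finset.range (K+1)) : Set ℕ).PairwiseDisjoint T := by
    intro i hi j hj hij
    rcases lt_or_gt_of_ne hij with h | h
    · refine Set.Disjoint.set_prod_left (Rset_disjoint ?_) _ _
      have h1 : (2:ℝ)^(i+1) ≤ 2^j := pow_le_pow_right₀ (by norm_num) h
      rw [pow_succ] at h1
      nlinarith [hε]
    · refine (Set.Disjoint.set_prod_left (Rset_disjoint ?_) _ _).symm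
      have h1 : (2:ℝ)^(j+1) ≤ 2^i := pow_le_pow_right₀ (by norm_num) h
      rw [pow_succ] at h1
      nlinarith [hε]
  have hTm : ∀ k ∈ Finset.range (K+1), MeasurableSet (T k) := fun k _ =>
    (Rset_measurable _).prod (Rset_measurable _)
  have hvol_sum : volume (⋃ k ∈ Finset.range (K+1), T k)
      = ∑ k ∈ Finset.range (K+1), volume (T k) :=
    measure_biUnion_finset hdisj hTm
  have hvol_each : ∀ k ∈ Finset.range (K+1), volume (T k) = ENNReal.ofReal (G/64) := by
    intro k hk
    have hkK : k ≤ K := Nat.lt_succ_iff.mp (Finset.mem_range.mp hk)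
    have h2k : (2:ℝ)^k * (2:ℝ)^(K-k) = 2^K := by
      rw [← pow_add, Nat.add_sub_cancel' hkK]
    rw [hT]
    rw [Measure.volume_eq_prod, Measure.prod_prod,
      Rset_volume (by positivity), Rset_volume (by positivity),
      ← ENNReal.ofReal_mul (by positivity)]
    congr 1
    rw [hGdef, ← h2k]
    ring
  have hlow : ENNReal.ofReal ((K+1 : ℝ) * (G/64)) ≤ volume SL := by
    calc ENNReal.ofReal ((K+1 : ℝ) * (G/64))
        = (K+1 : ℕ) * ENNReal.ofReal (G/64) := by
          rw [ENNReal.ofReal_mul (by positivity), ← ENNReal.ofReal_natCast (K+1)]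
          push_cast
          ring_nf
      _ = ∑ k ∈ Finset.range (K+1), volume (T k) := by
          rw [Finset.sum_congr rfl hvol_each, Finset.sum_const, Finset.card_range,
            nsmul_eq_mul]
      _ = volume (⋃ k ∈ Finset.range (K+1), T k) := hvol_sum.symm
      _ ≤ volume SL := measure_mono (iUnion₂_subset hTsub)
  -- apply the weak-type hypothesis
  have hup := hweak f hfint lam hlam
  rw [← hSL] at hup
  have hcomb := le_trans hlow hup
  rw [hfnorm, hNR] at hcomb
  have hRHS : C * (Real.pi^2*δ^4) / lam = 162 * C * Real.pi^2 * G := by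
    rw [hlamdef]
    field_simp
    ring
  rw [hRHS] at hcomb
  have hreal : (K+1 : ℝ) * (G/64) ≤ 162 * C * Real.pi^2 * G :=
    (ENNReal.ofReal_le_ofReal_iff (by positivity)).mp hcomb
  nlinarith [hG, hK, Real.pi_pos]
end
end

section
/- For 0 < s < 1 define f_s on 𝔻² by f_s(w₁,w₂) = (1-s²)⁴ |1 - s w₁|⁻⁴ |1 - s w₂|⁻⁴. Then ‖f_s‖_{L¹(𝔻²)} = π², and for every (z₁,z₂) ∈ 𝔻² one has P f_s(z₁,z₂) = (1 - s z₁)⁻² (1 - s z₂)⁻². -/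
open MeasureTheory Complex Set

noncomputable section

open Metric

noncomputable section


lemma circle_mvp {F : ℂ → ℂ} (hF : DifferentiableOn ℂ F (closedBall 0 1))
    {r : ℝ} (hr0 : 0 < r) (hr1 : r < 1) :
    (∫ θ in (0:ℝ)..(2 * Real.pi), F (circleMap 0 r θ)) = (2 * Real.pi : ℝ) • F 0 := by
  have hc : ContinuousOn F (closedBall 0 r) :=
    hF.continuousOn.mono (closedBall_subset_closedBall hr1.le)
  have hd : ∀ x ∈ ball (0:ℂ) r \ (∅ : Set ℂ), DifferentiableAt ℂ F x := by
    intro x hx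
    have hx1 : x ∈ ball (0:ℂ) 1 := ball_subset_ball hr1.le hx.1
    exact (hF x (ball_subset_closedBall hx1)).differentiableAt
      (mem_nhds_iff.2 ⟨ball 0 1, ball_subset_closedBall, isOpen_ball, hx1⟩)
  have key := Complex.circleIntegral_sub_inv_smul_of_differentiable_on_off_countable
    Set.countable_empty (mem_ball_self hr0) hc hd
  rw [circleIntegral] at key
  have hpt : ∀ θ : ℝ, deriv (circleMap 0 r) θ •
      (circleMap 0 r θ - 0)⁻¹ • F (circleMap 0 r θ) = Complex.I * F (circleMap 0 r θ) := by
    intro θ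
    have h0 : circleMap 0 r θ ≠ 0 := circleMap_ne_center hr0.ne'
    rw [deriv_circleMap, sub_zero, smul_eq_mul, smul_eq_mul]
    field_simp
  simp_rw [hpt] at key
  rw [intervalIntegral.integral_const_mul] at key
  have hI : (Complex.I : ℂ) ≠ 0 := Complex.I_ne_zero
  have : Complex.I * ∫ θ in (0:ℝ)..(2 * Real.pi), F (circleMap 0 r θ)
      = Complex.I * ((2 * Real.pi : ℝ) • F 0) := by
    rw [key, smul_eq_mul, Complex.real_smul]
    push_cast
    ring
  exact mul_left_cancel₀ hI this

lemma symm_eq_circleMap (r θ : ℝ) : Complex.polarCoord.symm (r, θ) = circleMap 0 r θ := by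
  simp [circleMap, Complex.exp_mul_I, ← Complex.ofReal_cos, ← Complex.ofReal_sin,
    Complex.polarCoord_symm_apply]

lemma disc_mvp {F : ℂ → ℂ} (hF : DifferentiableOn ℂ F (closedBall 0 1)) :
    (∫ z in ball (0:ℂ) 1, F z) = (Real.pi : ℂ) * F 0 := by
  have hcont : Continuous fun p : ℝ × ℝ => Complex.polarCoord.symm p := by
    simp only [Complex.polarCoord_symm_apply]
    continuity
  have hpre : MeasurableSet (Complex.polarCoord.symm ⁻¹' ball (0:ℂ) 1) :=
    hcont.measurable measurableSet_ball
  have step1 : (∫ z in ball (0:ℂ) 1, F z)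
      = ∫ p in polarCoord.target, p.1 • (ball (0:ℂ) 1).indicator F (Complex.polarCoord.symm p) := by
    rw [← MeasureTheory.integral_indicator measurableSet_ball, ← Complex.integral_comp_polarCoord_symm]
  have step2 : (fun p : ℝ × ℝ => p.1 • (ball (0:ℂ) 1).indicator F (Complex.polarCoord.symm p))
      = (Complex.polarCoord.symm ⁻¹' ball (0:ℂ) 1).indicator
          (fun p : ℝ × ℝ => p.1 • F (Complex.polarCoord.symm p)) := by
    funext p
    by_cases h : Complex.polarCoord.symm p ∈ ball (0:ℂ) 1
    · rw [indicator_of_mem h, indicator_of_mem (by exact h : p ∈ Complex.polarCoord.symm ⁻¹' ball (0:ℂ) 1)]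
    · rw [indicator_of_notMem h, indicator_of_notMem (by exact h : p ∉ Complex.polarCoord.symm ⁻¹' ball (0:ℂ) 1), smul_zero]
  have hset : polarCoord.target ∩ Complex.polarCoord.symm ⁻¹' ball (0:ℂ) 1
      = Ioo (0:ℝ) 1 ×ˢ Ioo (-Real.pi) Real.pi := by
    ext ⟨r, θ⟩
    simp only [polarCoord_target, mem_inter_iff, mem_prod, mem_Ioi, mem_Ioo, mem_preimage,
      mem_ball_zero_iff, Complex.norm_polarCoord_symm]
    constructor
    · rintro ⟨⟨hr, hθ⟩, habs⟩
      exact ⟨⟨hr, by rwa [abs_of_pos hr] at habs⟩, hθ⟩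
    · rintro ⟨⟨hr0, hr1⟩, hθ⟩
      exact ⟨⟨hr0, hθ⟩, by rwa [abs_of_pos hr0]⟩
  rw [step1, step2, setIntegral_indicator hpre, hset]
  have hint : IntegrableOn (fun p : ℝ × ℝ => p.1 • F (Complex.polarCoord.symm p))
      (Ioo (0:ℝ) 1 ×ˢ Ioo (-Real.pi) Real.pi) := by
    apply IntegrableOn.mono_set (t := Icc (0:ℝ) 1 ×ˢ Icc (-Real.pi) Real.pi)
    · apply ContinuousOn.integrableOn_compact (isCompact_Icc.prod isCompact_Icc)
      apply ContinuousOn.smul (continuous_fst.continuousOn)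
      apply hF.continuousOn.comp hcont.continuousOn
      intro p hp
      simp only [mem_closedBall_zero_iff, Complex.norm_polarCoord_symm]
      rcases hp with ⟨h1, _⟩
      rw [_root_.abs_of_nonneg h1.1]
      exact h1.2
    · exact Set.prod_mono Ioo_subset_Icc_self Ioo_subset_Icc_self
  rw [Measure.volume_eq_prod] at hint ⊢
  rw [setIntegral_prod _ hint]
  have inner : ∀ r ∈ Ioo (0:ℝ) 1,
      (∫ θ in Ioo (-Real.pi) Real.pi, r • F (Complex.polarCoord.symm (r, θ)))
        = (2 * Real.pi * r) • F 0 := by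
    intro r hr
    have hper : Function.Periodic (fun θ : ℝ => F (circleMap 0 r θ)) (2 * Real.pi) :=
      (periodic_circleMap 0 r).comp F
    have : (∫ θ in Ioo (-Real.pi) Real.pi, F (Complex.polarCoord.symm (r, θ)))
        = (2 * Real.pi : ℝ) • F 0 := by
      simp_rw [symm_eq_circleMap]
      rw [← integral_Ioc_eq_integral_Ioo,
        ← intervalIntegral.integral_of_le (by linarith [Real.pi_pos] : -Real.pi ≤ Real.pi)]
      have h1 := hper.intervalIntegral_add_eq (-Real.pi) 0
      rw [show -Real.pi + 2 * Real.pi = Real.pi by ring, zero_add] at h1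
      rw [h1]
      exact circle_mvp hF hr.1 hr.2
    rw [MeasureTheory.integral_smul, this, smul_smul]
    congr 1
    ring
  rw [setIntegral_congr_fun measurableSet_Ioo inner]
  rw [_root_.integral_smul_const]
  have : (∫ r in Ioo (0:ℝ) 1, 2 * Real.pi * r) = Real.pi := by
    rw [← integral_Ioc_eq_integral_Ioo,
      ← intervalIntegral.integral_of_le (by norm_num : (0:ℝ) ≤ 1)]
    rw [intervalIntegral.integral_const_mul, integral_id]
    ring
  rw [this, Complex.real_smul]



def phi (s : ℝ) (w : ℂ) : ℂ := ((s : ℂ) - w) / (1 - (s : ℂ) * w)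

lemma normSq_key (s : ℝ) (w : ℂ) :
    Complex.normSq (1 - (s : ℂ) * w) - Complex.normSq ((s : ℂ) - w)
      = (1 - s ^ 2) * (1 - Complex.normSq w) := by
  simp only [Complex.normSq_apply, Complex.sub_re, Complex.sub_im, Complex.mul_re, Complex.mul_im,
    Complex.ofReal_re, Complex.ofReal_im, Complex.one_re, Complex.one_im]
  ring

lemma one_sub_ne {s : ℝ} (hs0 : 0 < s) (hs1 : s < 1) {w : ℂ} (hw : ‖w‖ < 1) :
    (1 : ℂ) - (s : ℂ) * w ≠ 0 := by
  intro h
  have h1 : ‖(s:ℂ) * w‖ = 1 := by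
    have : (s : ℂ) * w = 1 := by linear_combination -h
    rw [this, norm_one]
  have h2 : ‖(s:ℂ) * w‖ < 1 := by
    rw [norm_mul, Complex.norm_real, Real.norm_eq_abs, abs_of_pos hs0]
    nlinarith [norm_nonneg w]
  linarith [h1 ▸ h2]

lemma phi_mem {s : ℝ} (hs0 : 0 < s) (hs1 : s < 1) {w : ℂ} (hw : ‖w‖ < 1) :
    ‖phi s w‖ < 1 := by
  have hne := one_sub_ne hs0 hs1 hw
  have habs : ‖1 - (s:ℂ) * w‖ ≠ 0 := by
    simpa using (norm_ne_zero_iff.mpr hne)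
  have hlt : Complex.normSq ((s:ℂ) - w) < Complex.normSq (1 - (s:ℂ) * w) := by
    have := normSq_key s w
    have hw2 : Complex.normSq w < 1 := by
      rw [← Complex.sq_norm]; nlinarith [norm_nonneg w]
    nlinarith [mul_pos (by nlinarith : (0:ℝ) < 1 - s ^ 2)
      (by linarith : (0:ℝ) < 1 - Complex.normSq w)]
  rw [phi, norm_div, div_lt_one (lt_of_le_of_ne (norm_nonneg _) (Ne.symm habs))]
  have := Complex.sq_norm ((s:ℂ) - w) ▸ Complex.sq_norm (1 - (s:ℂ)*w) ▸ hlt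
  nlinarith [norm_nonneg ((s:ℂ) - w), norm_nonneg (1 - (s:ℂ)*w)]

lemma phi_invol {s : ℝ} (hs0 : 0 < s) (hs1 : s < 1) {w : ℂ} (hw : ‖w‖ < 1) :
    phi s (phi s w) = w := by
  have h1 := one_sub_ne hs0 hs1 hw
  have h2 := one_sub_ne hs0 hs1 (phi_mem hs0 hs1 hw)
  have hs2 : (1 : ℂ) - (s:ℂ)^2 ≠ 0 := by
    intro h
    have : (s:ℂ)^2 = 1 := by linear_combination -h
    have : (s:ℝ)^2 = 1 := by exact_mod_cast this
    nlinarith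
  rw [show phi s (phi s w) = ((s:ℂ) - phi s w) / (1 - (s:ℂ) * phi s w) from rfl,
    div_eq_iff h2]
  simp only [phi] at h2 ⊢
  field_simp [h1] at h2 ⊢
  ring

lemma phi_hasDerivAt {s : ℝ} {w : ℂ} (hne : (1 : ℂ) - (s : ℂ) * w ≠ 0) :
    HasDerivAt (phi s) (((s:ℂ)^2 - 1) / (1 - (s:ℂ) * w)^2) w := by
  have hu : HasDerivAt (fun x : ℂ => (s:ℂ) - x) (-1) w := (hasDerivAt_id w).const_sub _
  have hv : HasDerivAt (fun x : ℂ => 1 - (s:ℂ) * x) (-(s:ℂ)) w := by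
    simpa using ((hasDerivAt_id w).const_mul (s:ℂ)).const_sub 1
  have := hu.div hv hne
  refine HasDerivAt.congr_deriv (f := phi s) this ?_
  ring

lemma det_aux (d : ℂ) :
    (((1 : ℂ →L[ℂ] ℂ).smulRight d).restrictScalars ℝ).det = Complex.normSq d := by
  have h : ((((1 : ℂ →L[ℂ] ℂ).smulRight d).restrictScalars ℝ : ℂ →L[ℝ] ℂ) : ℂ →ₗ[ℝ] ℂ)
      = LinearMap.mul ℝ ℂ d := by
    ext z
    simp [mul_comm]
  rw [ContinuousLinearMap.det, h]
  rw [← Algebra.norm_complex_apply]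
  rfl

lemma mobius_cov {E : Type*} [NormedAddCommGroup E] [NormedSpace ℝ E]
    {s : ℝ} (hs0 : 0 < s) (hs1 : s < 1) (h : ℂ → E) :
    (∫ u in ball (0:ℂ) 1, h (phi s u))
      = ∫ w in ball (0:ℂ) 1, ((1 - s ^ 2) ^ 2 * (‖1 - (s:ℂ) * w‖ ^ 4)⁻¹) • h w := by
  have himg : phi s '' ball (0:ℂ) 1 = ball (0:ℂ) 1 := by
    apply Subset.antisymm
    · rintro _ ⟨w, hw, rfl⟩
      rw [mem_ball_zero_iff] at hw ⊢
      exact phi_mem hs0 hs1 hw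
    · intro w hw
      rw [mem_ball_zero_iff] at hw
      refine ⟨phi s w, ?_, phi_invol hs0 hs1 hw⟩
      rw [mem_ball_zero_iff]
      exact phi_mem hs0 hs1 hw
  have hinj : InjOn (phi s) (ball (0:ℂ) 1) := by
    intro a ha b hb hab
    rw [mem_ball_zero_iff] at ha hb
    have := congrArg (phi s) hab
    rwa [phi_invol hs0 hs1 ha, phi_invol hs0 hs1 hb] at this
  set f' : ℂ → ℂ →L[ℝ] ℂ := fun w =>
    ((1 : ℂ →L[ℂ] ℂ).smulRight (((s:ℂ)^2 - 1) / (1 - (s:ℂ) * w)^2)).restrictScalars ℝ with hf'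
  have hderiv : ∀ w ∈ ball (0:ℂ) 1, HasFDerivWithinAt (phi s) (f' w) (ball (0:ℂ) 1) w := by
    intro w hw
    rw [mem_ball_zero_iff] at hw
    have := (phi_hasDerivAt (one_sub_ne hs0 hs1 hw)).hasFDerivAt
    exact (this.restrictScalars ℝ).hasFDerivWithinAt
  have key := integral_image_eq_integral_abs_det_fderiv_smul volume measurableSet_ball
    hderiv hinj fun u => h (phi s u)
  rw [himg] at key
  rw [key]
  apply setIntegral_congr_fun measurableSet_ball
  intro w hw
  rw [mem_ball_zero_iff] at hw
  have hne := one_sub_ne hs0 hs1 hw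
  have hdet : (f' w).det = (1 - s ^ 2) ^ 2 * (‖1 - (s:ℂ) * w‖ ^ 4)⁻¹ := by
    rw [hf', det_aux, map_div₀, map_pow, ← Complex.sq_norm, ← Complex.sq_norm]
    have : ‖(s:ℂ)^2 - 1‖ = 1 - s^2 := by
      rw [show ((s:ℂ)^2 - 1) = (((s^2 - 1 : ℝ)) : ℂ) by push_cast; ring, Complex.norm_real, Real.norm_eq_abs]
      rw [abs_of_neg (by nlinarith)]
      ring
    rw [this]
    rw [div_eq_mul_inv, ← pow_mul]
  simp only [hdet, phi_invol hs0 hs1 hw]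
  rw [_root_.abs_of_nonneg (by positivity)]

lemma factor_norm {s : ℝ} (hs0 : 0 < s) (hs1 : s < 1) :
    (∫ w in ball (0:ℂ) 1, (1 - s ^ 2) ^ 2 * (‖1 - (s:ℂ) * w‖ ^ 4)⁻¹) = Real.pi := by
  have key := mobius_cov (E := ℝ) hs0 hs1 (fun _ => (1:ℝ))
  simp only [smul_eq_mul, mul_one] at key
  rw [← key, setIntegral_const, smul_eq_mul, mul_one, measureReal_def, Complex.volume_ball]
  simp [ENNReal.toReal_mul]

lemma abs_sub_lt {s : ℝ} (hs0 : 0 < s) (hs1 : s < 1) {z : ℂ} (hz : ‖z‖ < 1) :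
    ‖z - (s:ℂ)‖ < ‖1 - (s:ℂ) * z‖ := by
  have hk := normSq_key s z
  have hz2 : Complex.normSq z < 1 := by
    rw [← Complex.sq_norm]; nlinarith [norm_nonneg z]
  have hpos : 0 < (1 - s ^ 2) * (1 - Complex.normSq z) := by
    apply mul_pos (by nlinarith) (by linarith)
  have h1 : Complex.normSq ((s:ℂ) - z) < Complex.normSq (1 - (s:ℂ) * z) := by linarith
  rw [show z - (s:ℂ) = -((s:ℂ) - z) by ring, norm_neg]
  rw [← Complex.sq_norm, ← Complex.sq_norm] at h1
  nlinarith [norm_nonneg ((s:ℂ) - z), norm_nonneg (1 - (s:ℂ) * z)]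

lemma integral_conj_ball (F : ℂ → ℂ) :
    (∫ u in ball (0:ℂ) 1, F ((starRingEnd ℂ) u)) = ∫ u in ball (0:ℂ) 1, F u := by
  have mp : MeasurePreserving (⇑Complex.conjLIE) volume volume :=
    Complex.conjLIE.measurePreserving
  have emb : MeasurableEmbedding (⇑Complex.conjLIE) :=
    Complex.conjLIE.toHomeomorph.measurableEmbedding
  have himg : (⇑Complex.conjLIE) '' ball (0:ℂ) 1 = ball (0:ℂ) 1 := by
    ext x
    simp only [mem_image, mem_ball_zero_iff, Complex.conjLIE_apply]
    constructor
    · rintro ⟨u, hu, rfl⟩; rwa [Complex.norm_conj]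
    · intro hx; exact ⟨(starRingEnd ℂ) x, by rwa [Complex.norm_conj], by simp⟩
  have key := mp.setIntegral_image_emb emb F (ball (0:ℂ) 1)
  rw [himg] at key
  simpa only [Complex.conjLIE_apply] using key.symm

lemma factor_proj {s : ℝ} (hs0 : 0 < s) (hs1 : s < 1) {z : ℂ} (hz : ‖z‖ < 1) :
    (∫ u in ball (0:ℂ) 1,
        (((1 - s ^ 2) ^ 2 * (‖1 - (s:ℂ) * u‖ ^ 4)⁻¹ : ℝ) : ℂ) /
          ((Real.pi : ℂ) * (1 - z * (starRingEnd ℂ) u) ^ 2))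
      = ((1 - (s:ℂ) * z) ^ 2)⁻¹ := by
  set N : ℂ → ℂ := fun v => (1 - z * (s:ℂ)) + v * (z - (s:ℂ)) with hN_def
  set F : ℂ → ℂ := fun v => (1 - (s:ℂ) * v) ^ 2 * ((N v) ^ 2)⁻¹ with hF_def
  set h : ℂ → ℂ := fun u => ((1 - z * (starRingEnd ℂ) u) ^ 2)⁻¹ with hh_def
  have hzs := abs_sub_lt hs0 hs1 hz
  have hN : ∀ v ∈ closedBall (0:ℂ) 1, N v ≠ 0 := by
    intro v hv h0
    rw [mem_closedBall_zero_iff] at hv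
    have h1 : (1 : ℂ) - z * (s:ℂ) = -(v * (z - (s:ℂ))) := by
      rw [hN_def] at h0; linear_combination h0
    have h2 : ‖1 - z * (s:ℂ)‖ ≤ ‖z - (s:ℂ)‖ := by
      rw [h1, norm_neg, norm_mul]
      nlinarith [norm_nonneg (z - (s:ℂ)), norm_nonneg v]
    rw [show (1:ℂ) - z * (s:ℂ) = 1 - (s:ℂ) * z by ring] at h2
    linarith
  have hFdiff : DifferentiableOn ℂ F (closedBall (0:ℂ) 1) := by
    apply DifferentiableOn.mul
    · exact (((differentiable_id.const_mul ((s:ℂ))).const_sub 1).pow 2).differentiableOn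
    · apply DifferentiableOn.inv
      · exact (((differentiable_id.mul_const (z - (s:ℂ))).const_add _).pow 2).differentiableOn
      · exact fun v hv => pow_ne_zero 2 (hN v hv)
  -- step C : on the ball, h (phi s u) = F (conj u)
  have hC : ∀ u ∈ ball (0:ℂ) 1, h (phi s u) = F ((starRingEnd ℂ) u) := by
    intro u hu
    rw [mem_ball_zero_iff] at hu
    have hcu : ‖(starRingEnd ℂ) u‖ < 1 := by rwa [Complex.norm_conj]
    have hden : (1 : ℂ) - (s:ℂ) * (starRingEnd ℂ) u ≠ 0 := one_sub_ne hs0 hs1 hcu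
    have hconj : (starRingEnd ℂ) (phi s u)
        = ((s:ℂ) - (starRingEnd ℂ) u) / (1 - (s:ℂ) * (starRingEnd ℂ) u) := by
      rw [phi, map_div₀, map_sub, map_sub, map_mul, map_one, Complex.conj_ofReal]
    have hfrac : (1 : ℂ) - z * (((s:ℂ) - (starRingEnd ℂ) u) / (1 - (s:ℂ) * (starRingEnd ℂ) u))
        = N ((starRingEnd ℂ) u) / (1 - (s:ℂ) * (starRingEnd ℂ) u) := by
      rw [hN_def]; field_simp; ring
    rw [hh_def, hF_def]
    simp only [hconj, hfrac]
    rw [div_pow, inv_div, div_eq_mul_inv, mul_comm]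
  -- assemble
  have step1 : (∫ u in ball (0:ℂ) 1,
        (((1 - s ^ 2) ^ 2 * (‖1 - (s:ℂ) * u‖ ^ 4)⁻¹ : ℝ) : ℂ) /
          ((Real.pi : ℂ) * (1 - z * (starRingEnd ℂ) u) ^ 2))
      = (Real.pi : ℂ)⁻¹ * ∫ u in ball (0:ℂ) 1,
          ((1 - s ^ 2) ^ 2 * (‖1 - (s:ℂ) * u‖ ^ 4)⁻¹ : ℝ) • h u := by
    rw [← MeasureTheory.integral_const_mul]
    apply setIntegral_congr_fun measurableSet_ball
    intro u _
    rw [hh_def]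
    push_cast
    rw [Complex.real_smul]
    push_cast
    rw [div_eq_mul_inv, mul_inv]
    ring
  have step2 := (mobius_cov hs0 hs1 h).symm
  have step3 : (∫ u in ball (0:ℂ) 1, h (phi s u))
      = ∫ u in ball (0:ℂ) 1, F ((starRingEnd ℂ) u) :=
    setIntegral_congr_fun measurableSet_ball hC
  have step4 := integral_conj_ball F
  have step5 := disc_mvp hFdiff
  have hF0 : F 0 = ((1 - z * (s:ℂ)) ^ 2)⁻¹ := by
    rw [hF_def]; simp [hN_def]
  rw [step1, step2, step3, step4, step5, hF0]
  have hpi : (Real.pi : ℂ) ≠ 0 := by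
    exact_mod_cast Real.pi_ne_zero
  rw [show (1:ℂ) - z * (s:ℂ) = 1 - (s:ℂ) * z by ring]
  field_simp

lemma bidisc_eq : bidisc = ball (0:ℂ) 1 ×ˢ ball (0:ℂ) 1 := by
  ext ⟨a, b⟩
  simp [bidisc, mem_ball_zero_iff]

/-- For `0 < s < 1`, the function
`f_s(w₁,w₂) = (1-s²)⁴ |1 - s w₁|⁻⁴ |1 - s w₂|⁻⁴` has `‖f_s‖_{L¹(𝔻²)} = π²`, and
`P f_s (z₁, z₂) = (1 - s z₁)⁻² (1 - s z₂)⁻²` on the bidisc. -/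
theorem bergmanBidisc_of_test_function (s : ℝ) (hs0 : 0 < s) (hs1 : s < 1) :
    (∫ w in bidisc,
        (1 - s ^ 2) ^ 4 * (‖1 - (s : ℂ) * w.1‖ ^ 4)⁻¹ *
          (‖1 - (s : ℂ) * w.2‖ ^ 4)⁻¹) = Real.pi ^ 2 ∧
    ∀ z ∈ bidisc,
      bergmanBidisc
          (fun w => (((1 - s ^ 2) ^ 4 * (‖1 - (s : ℂ) * w.1‖ ^ 4)⁻¹ *
            (‖1 - (s : ℂ) * w.2‖ ^ 4)⁻¹ : ℝ) : ℂ)) z =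
        ((1 - (s : ℂ) * z.1) ^ 2)⁻¹ * ((1 - (s : ℂ) * z.2) ^ 2)⁻¹ := by
  constructor
  · calc
      (∫ w in bidisc,
          (1 - s ^ 2) ^ 4 * (‖1 - (s : ℂ) * w.1‖ ^ 4)⁻¹ *
            (‖1 - (s : ℂ) * w.2‖ ^ 4)⁻¹)
          = ∫ w in ball (0:ℂ) 1 ×ˢ ball (0:ℂ) 1,
              ((1 - s ^ 2) ^ 2 * (‖1 - (s:ℂ) * w.1‖ ^ 4)⁻¹) *
                ((1 - s ^ 2) ^ 2 * (‖1 - (s:ℂ) * w.2‖ ^ 4)⁻¹) := by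
        rw [bidisc_eq]
        exact setIntegral_congr_fun (measurableSet_ball.prod measurableSet_ball)
          (fun w _ => by ring)
      _ = (∫ u in ball (0:ℂ) 1, (1 - s ^ 2) ^ 2 * (‖1 - (s:ℂ) * u‖ ^ 4)⁻¹) *
            (∫ u in ball (0:ℂ) 1, (1 - s ^ 2) ^ 2 * (‖1 - (s:ℂ) * u‖ ^ 4)⁻¹) := by
        rw [Measure.volume_eq_prod]
        exact setIntegral_prod_mul
          (fun u : ℂ => (1 - s ^ 2) ^ 2 * (‖1 - (s:ℂ) * u‖ ^ 4)⁻¹)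
          (fun u : ℂ => (1 - s ^ 2) ^ 2 * (‖1 - (s:ℂ) * u‖ ^ 4)⁻¹) _ _
      _ = Real.pi ^ 2 := by rw [factor_norm hs0 hs1]; ring
  · rintro ⟨z₁, z₂⟩ hz
    obtain ⟨hz1, hz2⟩ := hz
    rw [bergmanBidisc]
    calc
      (∫ w in bidisc,
          ((((1 - s ^ 2) ^ 4 * (‖1 - (s : ℂ) * w.1‖ ^ 4)⁻¹ *
            (‖1 - (s : ℂ) * w.2‖ ^ 4)⁻¹ : ℝ)) : ℂ) /
            ((Real.pi : ℂ) ^ 2 * (1 - z₁ * (starRingEnd ℂ) w.1) ^ 2 *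
              (1 - z₂ * (starRingEnd ℂ) w.2) ^ 2))
          = ∫ w in ball (0:ℂ) 1 ×ˢ ball (0:ℂ) 1,
              ((((1 - s ^ 2) ^ 2 * (‖1 - (s:ℂ) * w.1‖ ^ 4)⁻¹ : ℝ)) : ℂ) /
                  ((Real.pi : ℂ) * (1 - z₁ * (starRingEnd ℂ) w.1) ^ 2) *
                (((((1 - s ^ 2) ^ 2 * (‖1 - (s:ℂ) * w.2‖ ^ 4)⁻¹ : ℝ)) : ℂ) /
                  ((Real.pi : ℂ) * (1 - z₂ * (starRingEnd ℂ) w.2) ^ 2)) := by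
        rw [bidisc_eq]
        refine setIntegral_congr_fun (measurableSet_ball.prod measurableSet_ball)
          (fun w _ => ?_)
        push_cast
        simp only [div_eq_mul_inv, mul_inv]
        ring
      _ = (∫ u in ball (0:ℂ) 1,
              ((((1 - s ^ 2) ^ 2 * (‖1 - (s:ℂ) * u‖ ^ 4)⁻¹ : ℝ)) : ℂ) /
                ((Real.pi : ℂ) * (1 - z₁ * (starRingEnd ℂ) u) ^ 2)) *
            ∫ u in ball (0:ℂ) 1,
              ((((1 - s ^ 2) ^ 2 * (‖1 - (s:ℂ) * u‖ ^ 4)⁻¹ : ℝ)) : ℂ) /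
                ((Real.pi : ℂ) * (1 - z₂ * (starRingEnd ℂ) u) ^ 2) := by
        rw [Measure.volume_eq_prod]
        exact setIntegral_prod_mul
          (fun u : ℂ => ((((1 - s ^ 2) ^ 2 * (‖1 - (s:ℂ) * u‖ ^ 4)⁻¹ : ℝ)) : ℂ) /
            ((Real.pi : ℂ) * (1 - z₁ * (starRingEnd ℂ) u) ^ 2))
          (fun u : ℂ => ((((1 - s ^ 2) ^ 2 * (‖1 - (s:ℂ) * u‖ ^ 4)⁻¹ : ℝ)) : ℂ) /
            ((Real.pi : ℂ) * (1 - z₂ * (starRingEnd ℂ) u) ^ 2)) _ _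
      _ = ((1 - (s : ℂ) * z₁) ^ 2)⁻¹ * ((1 - (s : ℂ) * z₂) ^ 2)⁻¹ := by
        rw [factor_proj hs0 hs1 hz1, factor_proj hs0 hs1 hz2]
end
end
end

section
/- There is an absolute constant c > 0 such that for every s ∈ (0,1), setting λ = (1-s)⁻²/16, the set {(z₁,z₂) ∈ 𝔻² : |1 - s z₁|⁻² |1 - s z₂|⁻² > λ} has Lebesgue measure at least c λ⁻¹ log(1/(1-s²)). -/
open MeasureTheory Complex Set

noncomputable section

/-- rectangle in ℂ -/
def Rect (δ : ℝ) : Set ℂ := {z | z.re ∈ Ioo (1-δ/2) (1-δ/4) ∧ z.im ∈ Ioo 0 (δ/4)}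

lemma Rect_eq (δ : ℝ) : Rect δ =
    Complex.measurableEquivRealProd ⁻¹' (Ioo (1-δ/2) (1-δ/4) ×ˢ Ioo 0 (δ/4)) := by
  ext z
  simp [Rect, Complex.measurableEquivRealProd, Complex.equivRealProd]

lemma Rect_measurable (δ : ℝ) : MeasurableSet (Rect δ) := by
  rw [Rect_eq]
  exact Complex.measurableEquivRealProd.measurable (measurableSet_Ioo.prod measurableSet_Ioo)

lemma Rect_volume (δ : ℝ) (hδ : 0 ≤ δ) : volume (Rect δ) = ENNReal.ofReal (δ^2/16) := by
  rw [Rect_eq, Complex.volume_preserving_equiv_real_prod.measure_preimage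
    (measurableSet_Ioo.prod measurableSet_Ioo).nullMeasurableSet]
  rw [Measure.volume_eq_prod, Measure.prod_prod, Real.volume_Ioo, Real.volume_Ioo,
    ← ENNReal.ofReal_mul (by linarith)]
  norm_num
  ring_nf

lemma Rect_key (s δ : ℝ) (hs0 : 0 < s) (hs1 : s < 1) (h1 : 1 - s ≤ δ) (h2 : δ ≤ 1)
    {z : ℂ} (hz : z ∈ Rect δ) :
    ‖z‖ < 1 ∧ 0 < ‖1 - (s:ℂ)*z‖^2 ∧
      ‖1 - (s:ℂ)*z‖^2 < 4*δ^2 := by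
  obtain ⟨⟨hx1, hx2⟩, hy1, hy2⟩ := hz
  have hδ0 : 0 < δ := by linarith
  have hsq : ‖1 - (s:ℂ)*z‖^2 = (1 - s*z.re)^2 + (s*z.im)^2 := by
    rw [Complex.sq_norm, Complex.normSq_apply]
    simp
    ring
  have hzsq : ‖z‖ ^ 2 = z.re^2 + z.im^2 := by
    rw [Complex.sq_norm, Complex.normSq_apply]; ring
  have hx0 : 0 < z.re := by nlinarith
  have habs : ‖z‖ < 1 := by
    nlinarith [norm_nonneg z, hzsq]
  have hpos : 0 < 1 - s * z.re := by nlinarith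
  refine ⟨habs, ?_, ?_⟩
  · rw [hsq]; nlinarith
  · rw [hsq]
    have h3 : 1 - s * z.re < 3*δ/2 := by nlinarith
    have h4 : s * z.im < δ/4 := by nlinarith
    have h5 : 0 < s * z.im := by positivity
    nlinarith

lemma Rect_disjoint (t : ℝ) (ht : 0 < t) {i j : ℕ} (hij : i < j) :
    Disjoint (Rect (2^i * t)) (Rect (2^j * t)) := by
  rw [Set.disjoint_left]
  rintro z ⟨⟨h1, _⟩, _⟩ ⟨⟨_, h2⟩, _⟩
  have hpow : (2:ℝ)^(i+1) ≤ 2^j := pow_le_pow_right₀ (by norm_num) hij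
  have : (2:ℝ)^(i+1) = 2 * 2^i := by ring
  nlinarith [pow_pos (show (0:ℝ) < 2 by norm_num) i]

/-- There is an absolute constant `c > 0` such that for every `s ∈ (0,1)`, with
`λ = (1-s)⁻² / 16`, the set `{(z₁,z₂) ∈ 𝔻² : |1 - s z₁|⁻² |1 - s z₂|⁻² > λ}` has
Lebesgue measure at least `c λ⁻¹ log(1/(1-s²))`. -/
theorem measure_superlevel_set_lower_bound :
    ∃ c : ℝ, 0 < c ∧ ∀ s : ℝ, 0 < s → s < 1 →
      ENNReal.ofReal (c * (((1 - s) ^ 2)⁻¹ / 16)⁻¹ * Real.log (1 / (1 - s ^ 2))) ≤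
        volume {z ∈ bidisc |
          ((1 - s) ^ 2)⁻¹ / 16 <
            (‖1 - (s : ℂ) * z.1‖ ^ 2)⁻¹ *
              (‖1 - (s : ℂ) * z.2‖ ^ 2)⁻¹} := by
  refine ⟨1/4096, by norm_num, ?_⟩
  intro s hs0 hs1
  set t : ℝ := 1 - s with ht
  have ht0 : 0 < t := by simp only [ht]; linarith
  have ht1 : t < 1 := by simp only [ht]; linarith
  set K : ℕ := Nat.floor (Real.logb 2 t⁻¹) with hK
  set f : ℕ → Set (ℂ × ℂ) := fun k => Rect (2^k * t) ×ˢ Rect ((2:ℝ)⁻¹^k) with hf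
  -- basic bounds for k ≤ K
  have hone_le : (1:ℝ) ≤ t⁻¹ := (one_le_inv_iff₀).2 ⟨ht0, ht1.le⟩
  have hpow : ∀ k ≤ K, (2:ℝ)^k * t ≤ 1 := by
    intro k hk
    have hKle : (K:ℝ) ≤ Real.logb 2 t⁻¹ :=
      Nat.floor_le (Real.logb_nonneg (by norm_num) hone_le)
    have h1 : (k:ℝ) ≤ Real.logb 2 t⁻¹ := le_trans (Nat.cast_le.2 hk) hKle
    have h2 : (2:ℝ)^(k:ℝ) ≤ (2:ℝ)^(Real.logb 2 t⁻¹) :=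
      Real.rpow_le_rpow_of_exponent_le (by norm_num) h1
    rw [Real.rpow_logb (by positivity) (by norm_num) (by positivity)] at h2
    rw [Real.rpow_natCast] at h2
    calc (2:ℝ)^k * t ≤ t⁻¹ * t := by nlinarith
      _ = 1 := inv_mul_cancel₀ (ne_of_gt ht0)
  have hpow' : ∀ k ≤ K, t ≤ (2:ℝ)⁻¹^k := by
    intro k hk
    rw [inv_pow]
    have h2k : (0:ℝ) < 2^k := by positivity
    have := hpow k hk
    rw [le_inv_comm₀ ht0 h2k]
    calc (2:ℝ)^k = 2^k * t * t⁻¹ := by field_simp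
      _ ≤ 1 * t⁻¹ := mul_le_mul_of_nonneg_right this (by positivity)
      _ = t⁻¹ := one_mul _
  -- each f k is contained in the target set
  have hsub : ∀ k ≤ K, f k ⊆ {z ∈ bidisc |
      ((1 - s) ^ 2)⁻¹ / 16 <
        (‖1 - (s : ℂ) * z.1‖ ^ 2)⁻¹ *
          (‖1 - (s : ℂ) * z.2‖ ^ 2)⁻¹} := by
    intro k hk z hz
    have hδ1 : t ≤ 2^k * t := by nlinarith [one_le_pow₀ (show (1:ℝ) ≤ 2 by norm_num) (n := k)]
    have hδ'1 : (2:ℝ)⁻¹^k ≤ 1 := pow_le_one₀ (by norm_num) (by norm_num)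
    obtain ⟨ha1, hA0, hA⟩ := Rect_key s (2^k*t) hs0 hs1 hδ1 (hpow k hk) hz.1
    obtain ⟨hb1, hB0, hB⟩ := Rect_key s ((2:ℝ)⁻¹^k) hs0 hs1 (hpow' k hk) hδ'1 hz.2
    refine ⟨⟨ha1, hb1⟩, ?_⟩
    have hδδ : (2^k * t) * ((2:ℝ)⁻¹^k) = t := by
      rw [inv_pow]
      field_simp
    have hAB : ‖1 - (s:ℂ)*z.1‖^2 * ‖1 - (s:ℂ)*z.2‖^2 < 16 * t^2 := by
      calc ‖1 - (s:ℂ)*z.1‖^2 * ‖1 - (s:ℂ)*z.2‖^2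
          < (4*(2^k*t)^2) * (4*((2:ℝ)⁻¹^k)^2) := by
            exact mul_lt_mul'' hA hB hA0.le hB0.le
        _ = 16 * ((2^k * t) * ((2:ℝ)⁻¹^k))^2 := by ring
        _ = 16 * t^2 := by rw [hδδ]
    have heq : (((1 - s) ^ 2)⁻¹ / 16 : ℝ) = (16 * t^2)⁻¹ := by
      rw [ht, div_eq_mul_inv, ← mul_inv, mul_comm]
    rw [heq, ← mul_inv]
    exact inv_strictAnti₀ (by positivity) hAB
  -- measurability and disjointness
  have hmeas : ∀ k, MeasurableSet (f k) :=
    fun k => (Rect_measurable _).prod (Rect_measurable _)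
  have hdisj : ∀ i ∈ Finset.range (K+1), ∀ j ∈ Finset.range (K+1), i ≠ j →
      Disjoint (f i) (f j) := by
    have key : ∀ i j : ℕ, i < j → Disjoint (f i) (f j) := by
      intro i j hij
      rw [Set.disjoint_left]
      intro z hzi hzj
      exact Set.disjoint_left.1 (Rect_disjoint t ht0 hij) hzi.1 hzj.1
    intro i _ j _ hij
    rcases lt_or_gt_of_ne hij with h | h
    · exact key i j h
    · exact (key j i h).symm
  -- volume of each piece
  have hvol : ∀ k ≤ K, volume (f k) = ENNReal.ofReal (t^2/256) := by
    intro k hk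
    have h2k0 : (0:ℝ) ≤ 2^k * t := by positivity
    have hδδ : (2^k * t) * ((2:ℝ)⁻¹^k) = t := by
      rw [inv_pow]; field_simp
    rw [hf]
    simp only
    rw [Measure.volume_eq_prod, Measure.prod_prod, Rect_volume _ h2k0,
      Rect_volume _ (by positivity), ← ENNReal.ofReal_mul (by positivity)]
    congr 1
    have : (2^k*t)^2/16 * (((2:ℝ)⁻¹^k)^2/16) = ((2^k*t) * ((2:ℝ)⁻¹^k))^2/256 := by ring
    rw [this, hδδ]
  -- put it together
  have hunion : volume (⋃ k ∈ Finset.range (K+1), f k) ≤ volume {z ∈ bidisc |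
      ((1 - s) ^ 2)⁻¹ / 16 <
        (‖1 - (s : ℂ) * z.1‖ ^ 2)⁻¹ *
          (‖1 - (s : ℂ) * z.2‖ ^ 2)⁻¹} := by
    apply measure_mono
    intro z hz
    simp only [Set.mem_iUnion] at hz
    obtain ⟨k, hk, hzk⟩ := hz
    exact hsub k (Nat.lt_succ_iff.1 (Finset.mem_range.1 hk)) hzk
  have hsum : volume (⋃ k ∈ Finset.range (K+1), f k)
      = ∑ k ∈ Finset.range (K+1), volume (f k) :=
    measure_biUnion_finset hdisj (fun k _ => hmeas k)
  have hsum2 : ∑ k ∈ Finset.range (K+1), volume (f k)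
      = (K+1 : ℕ) * ENNReal.ofReal (t^2/256) := by
    rw [Finset.sum_congr rfl (fun k hk => hvol k (Nat.lt_succ_iff.1 (Finset.mem_range.1 hk)))]
    rw [Finset.sum_const, Finset.card_range, nsmul_eq_mul]
  refine le_trans ?_ hunion
  rw [hsum, hsum2]
  -- final real inequality
  have hL : Real.log (1 / (1 - s^2)) ≤ (K:ℝ) + 1 := by
    have h1 : (1:ℝ) / (1 - s^2) ≤ t⁻¹ := by
      rw [one_div]
      apply inv_anti₀ ht0
      nlinarith
    have hs2 : (0:ℝ) < 1 - s^2 := by nlinarith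
    have h2 : Real.log (1/(1-s^2)) ≤ Real.log t⁻¹ :=
      Real.log_le_log (by positivity) h1
    have h3 : Real.log t⁻¹ ≤ Real.logb 2 t⁻¹ := by
      rw [Real.logb, le_div_iff₀ (Real.log_pos (by norm_num))]
      have hlog0 : 0 ≤ Real.log t⁻¹ := Real.log_nonneg hone_le
      nlinarith [Real.log_two_lt_d9]
    have h4 : Real.logb 2 t⁻¹ < (K:ℝ) + 1 := Nat.lt_floor_add_one _
    linarith
  calc ENNReal.ofReal (1/4096 * (((1 - s) ^ 2)⁻¹ / 16)⁻¹ * Real.log (1 / (1 - s ^ 2)))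
      ≤ ENNReal.ofReal (((K:ℝ)+1) * (t^2/256)) := by
        apply ENNReal.ofReal_le_ofReal
        have heq : (((1 - s) ^ 2)⁻¹ / 16)⁻¹ = 16 * t^2 := by
          rw [ht, inv_div, div_inv_eq_mul]
        rw [heq]
        rcases le_or_gt (Real.log (1 / (1 - s ^ 2))) 0 with h | h
        · nlinarith
        · nlinarith
    _ = (K+1 : ℕ) * ENNReal.ofReal (t^2/256) := by
        rw [ENNReal.ofReal_mul (by positivity), ← ENNReal.ofReal_natCast (K+1)]
        norm_num
end
end

section
/- Let f ∈ L⁴(ℍ) and define g on 𝔻² by g(w₁,w₂) = w₂ · f(w₁w₂, w₂). Then ∫_{𝔻²} |g(w₁,w₂)|⁴ |w₂|^{-2} dV(w₁,w₂) = ∫_ℍ |f|⁴ dV, and for every (z₁,z₂) ∈ ℍ one has P f(z₁,z₂) = z₂^{-1} · P_{𝔻²} g(z₁/z₂, z₂), where P is the Bergman projection of ℍ and P_{𝔻²} is the Bergman projection of the bidisc. -/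
open MeasureTheory Complex Set

noncomputable section

/-- The Hartogs triangle `ℍ = {(z₁,z₂) ∈ ℂ² : |z₁| < |z₂| < 1}`. -/
def hartogs : Set (ℂ × ℂ) :=
  {z | ‖z.1‖ < ‖z.2‖ ∧ ‖z.2‖ < 1}

/-- The Bergman kernel of the Hartogs triangle. -/
noncomputable def hartogsKernel (z w : ℂ × ℂ) : ℂ :=
  ((Real.pi : ℂ) ^ 2 * z.2 * (starRingEnd ℂ) w.2 *
    (1 - z.1 * (starRingEnd ℂ) w.1 / (z.2 * (starRingEnd ℂ) w.2)) ^ 2 *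
    (1 - z.2 * (starRingEnd ℂ) w.2) ^ 2)⁻¹

/-- The Bergman projection on the Hartogs triangle. -/
noncomputable def bergmanHartogs (f : ℂ × ℂ → ℂ) (z : ℂ × ℂ) : ℂ :=
  ∫ w in hartogs, hartogsKernel z w * f w

lemma aux_alg (p v u A B W F : ℂ) (hv : v ≠ 0) (hu : u ≠ 0) :
    W * u * ((p ^ 2 * v * u * A ^ 2 * B ^ 2)⁻¹ * F)
      = v⁻¹ * (W * F / (p ^ 2 * A ^ 2 * B ^ 2)) := by
  rcases eq_or_ne p 0 with rfl | hp
  · simp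
  rcases eq_or_ne A 0 with rfl | hA
  · simp
  rcases eq_or_ne B 0 with rfl | hB
  · simp
  field_simp

open ContinuousLinearMap in
noncomputable def phiD (w : ℂ × ℂ) : (ℂ × ℂ) →L[ℂ] ℂ × ℂ :=
  (w.1 • snd ℂ ℂ ℂ + w.2 • fst ℂ ℂ ℂ).prod (snd ℂ ℂ ℂ)

lemma hasFDerivAt_phi (w : ℂ × ℂ) :
    HasFDerivAt (fun w : ℂ × ℂ => (w.1 * w.2, w.2)) ((phiD w).restrictScalars ℝ) w :=
  (((hasFDerivAt_fst (𝕜 := ℂ)).mul (hasFDerivAt_snd)).prodMk (hasFDerivAt_snd)).restrictScalars ℝ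

lemma det_phiD (w : ℂ × ℂ) :
    ((phiD w).restrictScalars ℝ).det = Complex.normSq w.2 := by
  have h : ((phiD w).restrictScalars ℝ).det
      = LinearMap.det ((((phiD w).restrictScalars ℝ) : (ℂ × ℂ) →L[ℝ] ℂ × ℂ) :
        (ℂ × ℂ) →ₗ[ℝ] ℂ × ℂ) := rfl
  rw [h, ← LinearMap.det_toMatrix (Complex.basisOneI.prod Complex.basisOneI)]
  have hM : LinearMap.toMatrix (Complex.basisOneI.prod Complex.basisOneI)
      (Complex.basisOneI.prod Complex.basisOneI)
      ((((phiD w).restrictScalars ℝ) : (ℂ × ℂ) →L[ℝ] ℂ × ℂ) : (ℂ × ℂ) →ₗ[ℝ] ℂ × ℂ)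
      = Matrix.fromBlocks !![w.2.re, -w.2.im; w.2.im, w.2.re]
          !![w.1.re, -w.1.im; w.1.im, w.1.re] 0 1 := by
    ext i j
    rcases i with i | i <;> rcases j with j | j <;> fin_cases i <;> fin_cases j <;>
      simp [LinearMap.toMatrix_apply, phiD, Module.Basis.prod_repr_inl, Module.Basis.prod_repr_inr,
        Complex.coe_basisOneI, Complex.coe_basisOneI_repr, Matrix.fromBlocks,
        Module.Basis.prod_apply, mul_re, mul_im]
  rw [hM, Matrix.det_fromBlocks_zero₂₁, Matrix.det_one, Matrix.det_fin_two_of,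
    Complex.normSq_apply]
  ring

lemma isOpen_bidisc : IsOpen bidisc :=
  (isOpen_lt (continuous_norm.comp continuous_fst) continuous_const).inter
    (isOpen_lt (continuous_norm.comp continuous_snd) continuous_const)

instance : (volume : Measure (ℂ × ℂ)).IsAddHaarMeasure := by
  rw [Measure.volume_eq_prod]; infer_instance

lemma phi_cov {E : Type*} [NormedAddCommGroup E] [NormedSpace ℝ E] (g : ℂ × ℂ → E) :
    ∫ z in hartogs, g z = ∫ w in bidisc, (‖w.2‖ ^ 2) • g (w.1 * w.2, w.2) := by
  set s : Set (ℂ × ℂ) := bidisc ∩ {w : ℂ × ℂ | w.2 ≠ 0} with hs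
  have hopen : IsOpen s := isOpen_bidisc.inter (isOpen_ne_fun continuous_snd continuous_const)
  have hmeas := hopen.measurableSet
  have himg : (fun w : ℂ × ℂ => (w.1 * w.2, w.2)) '' s = hartogs := by
    ext z
    constructor
    · rintro ⟨w, ⟨⟨h1, h2⟩, h3⟩, rfl⟩
      have h3' : 0 < ‖w.2‖ := by
        simpa using h3
      exact ⟨by simpa [norm_mul] using mul_lt_of_lt_one_left h3' h1, h2⟩
    · rintro ⟨h1, h2⟩
      have hz2' : 0 < ‖z.2‖ := lt_of_le_of_lt (norm_nonneg _) h1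
      have hz2 : z.2 ≠ 0 := by simpa using hz2'.ne'
      refine ⟨(z.1 / z.2, z.2), ⟨⟨?_, h2⟩, hz2⟩, ?_⟩
      · simpa [norm_div] using (div_lt_one hz2').mpr h1
      · simp [div_mul_cancel₀ _ hz2]
  have hinj : InjOn (fun w : ℂ × ℂ => (w.1 * w.2, w.2)) s := by
    rintro ⟨a1, a2⟩ ⟨_, ha⟩ ⟨b1, b2⟩ ⟨_, hb⟩ h
    simp only [Prod.mk.injEq] at h
    obtain ⟨h1, h2⟩ := h
    subst h2
    exact Prod.ext (mul_right_cancel₀ ha h1) rfl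
  rw [← himg, integral_image_eq_integral_abs_det_fderiv_smul volume hmeas
      (fun x _ => (hasFDerivAt_phi x).hasFDerivWithinAt) hinj]
  have h1 : ∀ w : ℂ × ℂ, |((phiD w).restrictScalars ℝ).det| • g (w.1 * w.2, w.2)
      = (‖w.2‖ ^ 2) • g (w.1 * w.2, w.2) := by
    intro w
    rw [det_phiD, _root_.abs_of_nonneg (Complex.normSq_nonneg _), Complex.sq_norm]
  simp only [h1]
  apply setIntegral_congr_set
  have hnull : volume ((Set.univ : Set ℂ) ×ˢ ({0} : Set ℂ)) = 0 := by
    rw [Measure.volume_eq_prod, Measure.prod_prod]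
    simp
  apply MeasureTheory.ae_eq_set.mpr
  constructor
  · rw [Set.diff_eq_empty.mpr Set.inter_subset_left]; exact measure_empty
  · refine measure_mono_null ?_ hnull
    rintro ⟨w1, w2⟩ ⟨hb, hns⟩
    simp only [hs, Set.mem_inter_iff, Set.mem_setOf_eq, not_and, not_not] at hns
    exact ⟨Set.mem_univ _, hns hb⟩

/-- For `f ∈ L⁴(ℍ)` and `g(w₁,w₂) = w₂ f(w₁w₂, w₂)` on the bidisc, one has
`∫_{𝔻²} |g|⁴ |w₂|⁻² dV = ∫_ℍ |f|⁴ dV` and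
`P f (z₁,z₂) = z₂⁻¹ P_{𝔻²} g (z₁/z₂, z₂)` for every `(z₁,z₂) ∈ ℍ`. -/
theorem bergmanHartogs_eq_bergmanBidisc (f : ℂ × ℂ → ℂ)
    (hf : IntegrableOn (fun z => ‖f z‖ ^ 4) hartogs volume) :
    (∫ w in bidisc,
        ‖w.2 * f (w.1 * w.2, w.2)‖ ^ 4 * (‖w.2‖ ^ 2)⁻¹) =
      ∫ z in hartogs, ‖f z‖ ^ 4 ∧
    ∀ z ∈ hartogs,
      bergmanHartogs f z =
        z.2⁻¹ * bergmanBidisc (fun w => w.2 * f (w.1 * w.2, w.2)) (z.1 / z.2, z.2) := by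
  constructor
  · rw [phi_cov (fun z => ‖f z‖ ^ 4)]
    refine setIntegral_congr_fun isOpen_bidisc.measurableSet fun w _ => ?_
    rcases eq_or_ne w.2 0 with h | h
    · simp [h]
    · have hne : ‖w.2‖ ≠ 0 := by simpa using h
      rw [norm_mul, smul_eq_mul]
      field_simp
  · intro z hz
    have hz2 : z.2 ≠ 0 := by
      have : 0 < ‖z.2‖ := lt_of_le_of_lt (norm_nonneg _) hz.1
      simpa using this.ne'
    rw [bergmanHartogs, phi_cov (fun w => hartogsKernel z w * f w), bergmanBidisc,
      ← integral_const_mul]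
    refine setIntegral_congr_fun isOpen_bidisc.measurableSet fun w _ => ?_
    simp only
    rcases eq_or_ne w.2 0 with h | h
    · simp [hartogsKernel, h]
    · have hc2 : (starRingEnd ℂ) w.2 ≠ 0 := by simpa using h
      have hA : z.1 * ((starRingEnd ℂ) (w.1 * w.2)) / (z.2 * (starRingEnd ℂ) w.2)
          = z.1 / z.2 * ((starRingEnd ℂ) w.1) := by
        rw [map_mul]; field_simp
      simp only [hartogsKernel]
      rw [hA]
      have hre : ((‖w.2‖ ^ 2 : ℝ) : ℂ) = w.2 * (starRingEnd ℂ) w.2 := by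
        rw [Complex.sq_norm, Complex.mul_conj]
      rw [Complex.real_smul, hre]
      exact aux_alg _ _ _ _ _ _ _ hz2 hc2
end
end
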